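/- For all positive integers k and n, the line graph on n vertices has a reversible pebbling with space at most 2k·n^{1/k} and time at most 2^k·n. -/

import Mathlib

open MvPolynomial

/-- A finite directed graph. -/
structure FinDigraph where
  V : Type
  [instFintype : Fintype V]
  Edge : V → V → Prop

attribute [instance] FinDigraph.instFintype

namespace FinDigraph

/-- The set of (immediate) predecessors of a vertex. -/
def pred (G : FinDigraph) (v : G.V) : Set G.V := {u | G.Edge u v}

/-- A directed graph is acyclic if no vertex reaches itself by a nonempty path. -/
def Acyclic (G : FinDigraph) : Prop := ∀ v, ¬ Relation.TransGen G.Edge v v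

/-- A sink is a vertex with no outgoing edge. -/
def IsSink (G : FinDigraph) (z : G.V) : Prop := ∀ u, ¬ G.Edge z u

/-- `z` is the unique sink of `G`. -/
def UniqueSink (G : FinDigraph) (z : G.V) : Prop :=
  G.IsSink z ∧ ∀ v, G.IsSink v → v = z

/-- One legal move of the reversible pebble game: place a pebble on a vertex all of whose
predecessors are pebbled, or remove a pebble from such a vertex. -/
def RevMove (G : FinDigraph) (P Q : Set G.V) : Prop :=
  ∃ v, G.pred v ⊆ P ∧
    ((v ∉ P ∧ Q = insert v P) ∨ (v ∈ P ∧ Q = P \ {v}))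

/-- One legal move of the standard pebble game: place a pebble on a vertex all of whose
predecessors are pebbled, or remove a pebble from an arbitrary vertex. -/
def StdMove (G : FinDigraph) (P Q : Set G.V) : Prop :=
  (∃ v, G.pred v ⊆ P ∧ v ∉ P ∧ Q = insert v P) ∨ (∃ v, v ∈ P ∧ Q = P \ {v})

/-- A reversible pebbling of `G` (with sink `z`) with time `t`. -/
def IsRevPebbling (G : FinDigraph) (z : G.V) (t : ℕ) (P : ℕ → Set G.V) : Prop :=
  P 0 = ∅ ∧ P t = ∅ ∧ (∃ i ≤ t, z ∈ P i) ∧ ∀ i < t, G.RevMove (P i) (P (i + 1))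

/-- A standard pebbling of `G` (with sink `z`) with time `t`. -/
def IsStdPebbling (G : FinDigraph) (z : G.V) (t : ℕ) (P : ℕ → Set G.V) : Prop :=
  P 0 = ∅ ∧ P t = ∅ ∧ (∃ i ≤ t, z ∈ P i) ∧ ∀ i < t, G.StdMove (P i) (P (i + 1))

/-- The space of a pebbling: the maximal number of pebbles in any configuration. -/
noncomputable def space (G : FinDigraph) (t : ℕ) (P : ℕ → Set G.V) : ℕ :=
  (Finset.range (t + 1)).sup fun i => (P i).ncard

end FinDigraph

/-- The line graph on `n` vertices: the directed path `v_0 → v_1 → ⋯ → v_{n-1}`. -/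
def lineGraph (n : ℕ) : FinDigraph :=
  { V := Fin n, Edge := fun i j => (j : ℕ) = (i : ℕ) + 1 }


namespace LGRP

/-- A reversible-pebbling move on the infinite path over ℕ, with frozen support `F`. -/
def MoveF (F P Q : Set ℕ) : Prop :=
  ∃ v, v ∉ F ∧ (∀ u, v = u + 1 → u ∈ P ∪ F) ∧
    ((v ∉ P ∧ Q = insert v P) ∨ (v ∈ P ∧ Q = P \ {v}))

lemma MoveF.symm {F P Q : Set ℕ} (h : MoveF F P Q) : MoveF F Q P := by
  obtain ⟨v, hvF, hpred, hcase⟩ := h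
  rcases hcase with ⟨h1, h2⟩ | ⟨h1, h2⟩
  · refine ⟨v, hvF, ?_, Or.inr ⟨h2 ▸ Set.mem_insert _ _, ?_⟩⟩
    · intro u hu
      rcases hpred u hu with h | h
      · exact Or.inl (h2 ▸ Set.subset_insert _ _ h)
      · exact Or.inr h
    · rw [h2, Set.insert_diff_self_of_notMem h1]
  · refine ⟨v, hvF, ?_, Or.inl ⟨?_, ?_⟩⟩
    · intro u hu
      rcases hpred u hu with h | h
      · left; rw [h2]; exact ⟨h, by simp; omega⟩
      · exact Or.inr h
    · rw [h2]; simp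
    · rw [h2, Set.insert_diff_singleton, Set.insert_eq_self.mpr h1]

lemma MoveF.lift {F G D A P Q : Set ℕ} (h : MoveF F P Q)
    (hP : P ⊆ A) (hQ : Q ⊆ A) (hD : ∀ x ∈ D, x ∉ A) (hG : ∀ x ∈ G, x ∉ A)
    (hF : F ⊆ D ∪ G) : MoveF G (P ∪ D) (Q ∪ D) := by
  obtain ⟨v, hvF, hpred, hcase⟩ := h
  have hvA : v ∈ A := by
    rcases hcase with ⟨h1, h2⟩ | ⟨h1, h2⟩
    · exact hQ (h2 ▸ Set.mem_insert _ _)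
    · exact hP h1
  have hvD : v ∉ D := fun hv => hD v hv hvA
  refine ⟨v, fun hvG => hG v hvG hvA, ?_, ?_⟩
  · intro u hu
    rcases hpred u hu with h | h
    · exact Or.inl (Or.inl h)
    · rcases hF h with h | h
      · exact Or.inl (Or.inr h)
      · exact Or.inr h
  · rcases hcase with ⟨h1, h2⟩ | ⟨h1, h2⟩
    · left
      refine ⟨?_, by rw [h2, Set.insert_union]⟩
      rintro (h | h)
      · exact h1 h
      · exact hvD h
    · right
      refine ⟨Or.inl h1, ?_⟩
      rw [h2, Set.union_diff_distrib, Set.diff_singleton_eq_self hvD]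

lemma chain'_lift {F G D A : Set ℕ} {L : List (Set ℕ)}
    (hc : L.Chain' (MoveF F)) (hA : ∀ C ∈ L, C ⊆ A)
    (hD : ∀ x ∈ D, x ∉ A) (hG : ∀ x ∈ G, x ∉ A) (hF : F ⊆ D ∪ G) :
    (L.map (· ∪ D)).Chain' (MoveF G) := by
  unfold List.Chain' at hc ⊢
  rw [List.isChain_iff_getElem] at hc ⊢
  intro i hi
  simp only [List.length_map] at hi
  simp only [List.get_eq_getElem, List.getElem_map]
  exact (hc i hi).lift (hA _ (L.getElem_mem _)) (hA _ (L.getElem_mem _)) hD hG hF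

lemma chain'_reverse_moveF {F : Set ℕ} {L : List (Set ℕ)} (h : L.Chain' (MoveF F)) :
    L.reverse.Chain' (MoveF F) := by
  unfold List.Chain' at h ⊢
  rw [List.isChain_reverse]
  exact h.imp fun a b hab => hab.symm

lemma chain'_glue {α} {R : α → α → Prop} {L1 L2 : List α}
    (h1 : L1.Chain' R) (h2 : L2.Chain' R) (h : L1.getLast? = L2.head?) :
    (L1 ++ L2.tail).Chain' R := by
  cases L2 with
  | nil => simpa using h1
  | cons x l =>
    unfold List.Chain' at h1 h2 ⊢
    rw [List.isChain_append]
    refine ⟨h1, (List.isChain_cons.mp h2).2, ?_⟩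
    intro a ha b hb
    rw [h] at ha
    simp only [List.head?_cons, Option.mem_def, Option.some.injEq] at ha
    subst ha
    exact (List.isChain_cons.mp h2).1 b hb

lemma getLast?_glue {α} {L1 L2 : List α} (h : L1.getLast? = L2.head?) (h2 : L2 ≠ []) :
    (L1 ++ L2.tail).getLast? = L2.getLast? := by
  cases L2 with
  | nil => simp at h2
  | cons x l =>
    cases l with
    | nil => simpa using h
    | cons y l' =>
      rw [List.tail_cons, List.getLast?_append, List.getLast?_cons_cons]
      obtain ⟨z, hz⟩ := Option.isSome_iff_exists.mp (List.getLast?_isSome.mpr (by simp : y :: l' ≠ []))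
      simp [hz]

end LGRP
namespace LGRP

/-- Checkpoints: ends of the first `i` blocks of size `s` within a segment `[a, a+m)`. -/
def ckpt (a s m i : ℕ) : Finset ℕ := (Finset.Icc 1 i).image (fun j => a + min (j * s) m - 1)

/-- Spec: a reversible "toggle" of the last vertex of any segment of length `m ≤ c^k`,
using support just below the segment, with space `k(c-1)+1` and at most `2^k m` moves. -/
def ToggleSpec (k c : ℕ) : Prop := ∀ a m, 1 ≤ m → m ≤ c ^ k →
  ∃ L : List (Set ℕ),
    L.head? = some ∅ ∧
    L.getLast? = some {a + m - 1} ∧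
    L.Chain' (MoveF (Set.Ico (a - 1) a)) ∧
    (∀ C ∈ L, C ⊆ Set.Ico a (a + m)) ∧
    (∀ C ∈ L, C.ncard ≤ k * (c - 1) + 1) ∧
    L.length ≤ 2 ^ k * m + 1

lemma toggle_base (c : ℕ) : ToggleSpec 0 c := by
  intro a m hm hmc
  have hm1 : m = 1 := by simpa using le_antisymm hmc hm
  subst hm1
  refine ⟨[∅, {a}], rfl, rfl, ?_, ?_, ?_, by simp⟩
  · refine List.isChain_cons_cons.mpr ⟨⟨a, ?_, ?_, Or.inl ⟨by simp, by simp⟩⟩, by simp⟩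
    · simp only [Set.mem_Ico, not_and, not_lt]; omega
    · intro u hu
      right
      simp [Set.mem_Ico]; omega
  · intro C hC
    simp at hC
    rcases hC with rfl | rfl
    · simp
    · intro x hx; simp at hx; subst hx; simp [Set.mem_Ico]
  · intro C hC
    simp at hC
    rcases hC with rfl | rfl <;> simp

lemma fwd (k c : ℕ) (hc : 1 ≤ c) (H : ToggleSpec k c) (a m : ℕ) (hm : 1 ≤ m)
    (hmc : m ≤ c ^ (k + 1)) :
    ∀ i, i ≤ (m + c ^ k - 1) / c ^ k →
    ∃ L : List (Set ℕ),
      L.head? = some ∅ ∧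
      L.getLast? = some ↑(ckpt a (c ^ k) m i) ∧
      L.Chain' (MoveF (Set.Ico (a - 1) a)) ∧
      (∀ C ∈ L, C ⊆ Set.Ico a (a + min (i * c ^ k) m)) ∧
      (∀ C ∈ L, C.ncard ≤ i + k * (c - 1)) ∧
      L.length ≤ 2 ^ k * min (i * c ^ k) m + 1 := by
  set s := c ^ k with hs_def
  have hs : 1 ≤ s := Nat.one_le_pow _ _ hc
  set b := (m + s - 1) / s with hb_def
  have hdm : s * b + (m + s - 1) % s = m + s - 1 := Nat.div_add_mod _ _
  have hmod : (m + s - 1) % s < s := Nat.mod_lt _ hs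
  have hbs : m ≤ s * b := by omega
  have hlt : ∀ i, i < b → i * s < m := by
    intro i hi
    have h1 : s * (i + 1) ≤ s * b := Nat.mul_le_mul_left s hi
    have h2 : s * (i + 1) = s * i + s := by ring
    have h3 : s * i = i * s := by ring
    omega
  -- elements of ckpt
  have hEmem : ∀ i x, x ∈ ckpt a s m i → a ≤ x ∧ x + 1 ≤ a + min (i * s) m := by
    intro i x hx
    simp only [ckpt, Finset.mem_image, Finset.mem_Icc] at hx
    obtain ⟨j, ⟨hj1, hj2⟩, rfl⟩ := hx
    have hjs : s ≤ j * s := by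
      calc s = 1 * s := (one_mul s).symm
      _ ≤ j * s := Nat.mul_le_mul_right s hj1
    have hji : j * s ≤ i * s := Nat.mul_le_mul_right s hj2
    omega
  intro i
  induction i with
  | zero =>
    intro _
    refine ⟨[∅], rfl, by simp [ckpt], by simp [List.Chain'], by simp, by simp, by simp⟩
  | succ i ih =>
    intro hib
    obtain ⟨L, hLh, hLl, hLc, hLA, hLn, hLlen⟩ := ih (by omega)
    have him : i * s < m := hlt i (by omega)
    have hmin : min (i * s) m = i * s := by omega
    set a' := a + i * s with ha'_def
    set m' := min s (m - i * s) with hm'_def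
    have hm'1 : 1 ≤ m' := by omega
    have hm's : m' ≤ c ^ k := min_le_left _ _
    obtain ⟨L', h'h, h'l, h'c, h'A, h'n, h'len⟩ := H a' m' hm'1 hm's
    have ham : a' + m' = a + min ((i + 1) * s) m := by
      have : (i + 1) * s = i * s + s := by ring
      omega
    -- lift L' by the current checkpoint set
    have hDd : ∀ x ∈ (↑(ckpt a s m i) : Set ℕ), x ∉ Set.Ico a' (a' + m') := by
      intro x hx
      obtain ⟨hx1, hx2⟩ := hEmem i x hx
      simp only [Set.mem_Ico, not_and, not_lt]
      omega
    have hGg : ∀ x ∈ Set.Ico (a - 1) a, x ∉ Set.Ico a' (a' + m') := by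
      intro x hx
      simp only [Set.mem_Ico, not_and, not_lt] at hx ⊢
      omega
    have hFf : Set.Ico (a' - 1) a' ⊆ ↑(ckpt a s m i) ∪ Set.Ico (a - 1) a := by
      rcases Nat.eq_zero_or_pos i with rfl | hi0
      · intro x hx
        right
        have ha'a : a' = a := by simp [ha'_def]
        rwa [ha'a] at hx
      · intro x hx
        left
        simp only [Set.mem_Ico] at hx
        have ha'1 : 1 ≤ a' := by
          have h5 : s ≤ i * s := by
            calc s = 1 * s := (one_mul s).symm
            _ ≤ i * s := Nat.mul_le_mul_right s hi0
          omega
        have hxe : x = a' - 1 := by omega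
        simp only [ckpt, Finset.coe_image, Set.mem_image, Finset.coe_Icc, Set.mem_Icc]
        refine ⟨i, ⟨hi0, le_refl i⟩, ?_⟩
        omega
    have hlift : ((L'.map (· ∪ ↑(ckpt a s m i))).Chain' (MoveF (Set.Ico (a - 1) a))) :=
      chain'_lift h'c h'A hDd hGg hFf
    set piece := L'.map (· ∪ ↑(ckpt a s m i)) with hpiece_def
    have hph : piece.head? = some ↑(ckpt a s m i) := by
      rw [hpiece_def, List.head?_map, h'h]
      simp
    have hE1 : (↑(ckpt a s m (i + 1)) : Set ℕ) = {a' + m' - 1} ∪ ↑(ckpt a s m i) := by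
      have hicc : Finset.Icc 1 (i + 1) = insert (i + 1) (Finset.Icc 1 i) :=
        (Finset.insert_Icc_right_eq_Icc_add_one (by omega)).symm
      have hf : a + min ((i + 1) * s) m - 1 = a' + m' - 1 := by omega
      rw [ckpt, hicc, Finset.image_insert, Finset.coe_insert, hf, Set.singleton_union]
      rfl
    have hpl : piece.getLast? = some ↑(ckpt a s m (i + 1)) := by
      rw [hpiece_def, List.getLast?_map, h'l, hE1]
      rfl
    refine ⟨L ++ piece.tail, ?_, ?_, ?_, ?_, ?_, ?_⟩
    · cases L with
      | nil => simp at hLh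
      | cons x t => simpa using hLh
    · rw [getLast?_glue (by rw [hLl, hph]) (by rw [hpiece_def]; simp; intro h; rw [h] at h'h; simp at h'h), hpl]
    · exact chain'_glue hLc hlift (by rw [hLl, hph])
    · intro C hC
      rcases List.mem_append.mp hC with hC | hC
      · refine (hLA C hC).trans ?_
        apply Set.Ico_subset_Ico_right
        have : i * s ≤ (i + 1) * s := Nat.mul_le_mul_right s (by omega)
        omega
      · obtain ⟨C', hC', rfl⟩ := List.mem_map.mp (List.mem_of_mem_tail hC)
        apply Set.union_subset
        · refine (h'A C' hC').trans ?_
          intro x hx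
          simp only [Set.mem_Ico] at hx ⊢
          omega
        · intro x hx
          obtain ⟨hx1, hx2⟩ := hEmem i x hx
          simp only [Set.mem_Ico]
          have : i * s ≤ (i + 1) * s := Nat.mul_le_mul_right s (by omega)
          omega
    · intro C hC
      rcases List.mem_append.mp hC with hC | hC
      · exact (hLn C hC).trans (by omega)
      · obtain ⟨C', hC', rfl⟩ := List.mem_map.mp (List.mem_of_mem_tail hC)
        have h1 : C'.ncard ≤ k * (c - 1) + 1 := h'n C' hC'
        have h2 : (↑(ckpt a s m i) : Set ℕ).ncard ≤ i := by
          rw [Set.ncard_coe_finset]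
          calc (ckpt a s m i).card ≤ (Finset.Icc 1 i).card := Finset.card_image_le
          _ = i := by rw [Nat.card_Icc]; omega
        calc (C' ∪ ↑(ckpt a s m i)).ncard ≤ C'.ncard + (↑(ckpt a s m i) : Set ℕ).ncard :=
              Set.ncard_union_le _ _
        _ ≤ (k * (c - 1) + 1) + i := by omega
        _ = (i + 1) + k * (c - 1) := by omega
    · rw [List.length_append, List.length_tail, hpiece_def, List.length_map]
      have hL1 : 1 ≤ L'.length := by
        cases L' with
        | nil => simp at h'h
        | cons x t => simp
      have hmin2 : min ((i + 1) * s) m = min (i * s) m + m' := by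
        have h4 : (i + 1) * s = i * s + s := by ring
        omega
      have hdist : 2 ^ k * min ((i + 1) * s) m = 2 ^ k * min (i * s) m + 2 ^ k * m' :=
        by rw [hmin2, Nat.mul_add]
      omega

end LGRP
namespace LGRP

lemma toggle_succ (k c : ℕ) (hc : 1 ≤ c) (H : ToggleSpec k c) : ToggleSpec (k + 1) c := by
  intro a m hm hmc
  set s := c ^ k with hs_def
  have hs : 1 ≤ s := Nat.one_le_pow _ _ hc
  set b := (m + s - 1) / s with hb_def
  have hdm : s * b + (m + s - 1) % s = m + s - 1 := Nat.div_add_mod _ _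
  have hmod : (m + s - 1) % s < s := Nat.mod_lt _ hs
  have hbs : m ≤ s * b := by omega
  have hb1 : 1 ≤ b := by
    rcases Nat.eq_zero_or_pos b with h | h
    · rw [h] at hbs; omega
    · exact h
  obtain ⟨b', hb'⟩ : ∃ b', b = b' + 1 := ⟨b - 1, by omega⟩
  have hmsc : m ≤ s * c := by
    rw [hs_def, ← pow_succ]; exact hmc
  have hbc : b ≤ c := by
    have h1 : s * b < s * (c + 1) := by
      have h2 : s * (c + 1) = s * c + s := by ring
      omega
    have := Nat.lt_of_mul_lt_mul_left h1
    omega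
  have h6 : s * b' + s = s * b := by rw [hb']; ring
  have h7 : (b - 1) * s = s * b' := by rw [hb']; simp; ring
  have hblt : (b - 1) * s < m := by omega
  have hminb : min (b * s) m = m := by
    have : b * s = s * b := by ring
    omega
  have hminb1 : min ((b - 1) * s) m = (b - 1) * s := by omega
  have hbb : b = (m + c ^ k - 1) / c ^ k := by rw [hb_def, hs_def]
  obtain ⟨L1, h1h, h1l, h1c, h1A, h1n, h1len⟩ :=
    fwd k c hc H a m hm hmc b (le_of_eq hbb)
  obtain ⟨L2, h2h, h2l, h2c, h2A, h2n, h2len⟩ := fwd k c hc H a m hm hmc (b - 1) (by omega)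
  rw [← hs_def] at h1l h1A h1len h2l h2A h2len
  have hL2ne : L2 ≠ [] := by intro h; rw [h] at h2h; simp at h2h
  -- the second half: reverse of L2, lifted by the final pebble
  set piece := (L2.reverse).map (· ∪ ({a + m - 1} : Set ℕ)) with hpiece_def
  have hpc : piece.Chain' (MoveF (Set.Ico (a - 1) a)) := by
    apply chain'_lift (chain'_reverse_moveF h2c)
      (fun C hC => h2A C (List.mem_reverse.mp hC))
    · intro x hx
      simp only [Set.mem_singleton_iff] at hx
      subst hx
      simp only [Set.mem_Ico, not_and, not_lt]
      omega
    · intro x hx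
      simp only [Set.mem_Ico, not_and, not_lt] at hx ⊢
      omega
    · exact Set.subset_union_right
  have hEb : insert (a + m - 1) (↑(ckpt a s m (b - 1)) : Set ℕ) = ↑(ckpt a s m b) := by
    have hicc : Finset.Icc 1 b = insert b (Finset.Icc 1 (b - 1)) := by
      rw [hb']
      simpa using (Finset.insert_Icc_right_eq_Icc_add_one (by omega : 1 ≤ b' + 1)).symm
    simp only [ckpt]
    rw [hicc, Finset.image_insert, Finset.coe_insert,
      show a + min (b * s) m - 1 = a + m - 1 from by omega]
  have hph : piece.head? = some ↑(ckpt a s m b) := by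
    rw [hpiece_def, List.head?_map, List.head?_reverse, h2l, Option.map_some,
      Set.union_singleton, hEb]
  have hpl : piece.getLast? = some {a + m - 1} := by
    rw [hpiece_def, List.getLast?_map, List.getLast?_reverse, h2h]
    simp
  have hpne : piece ≠ [] := by
    rw [hpiece_def]
    simp only [ne_eq, List.map_eq_nil_iff, List.reverse_eq_nil_iff]
    exact hL2ne
  refine ⟨L1 ++ piece.tail, ?_, ?_, ?_, ?_, ?_, ?_⟩
  · cases L1 with
    | nil => simp at h1h
    | cons x t => simpa using h1h
  · rw [getLast?_glue (by rw [h1l, hph]) hpne, hpl]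
  · exact chain'_glue h1c hpc (by rw [h1l, hph])
  · intro C hC
    rcases List.mem_append.mp hC with hC | hC
    · have := h1A C hC
      rwa [hminb] at this
    · obtain ⟨C', hC', rfl⟩ := List.mem_map.mp (List.mem_of_mem_tail hC)
      apply Set.union_subset
      · refine (h2A C' (List.mem_reverse.mp hC')).trans ?_
        apply Set.Ico_subset_Ico_right
        omega
      · intro x hx
        simp only [Set.mem_singleton_iff] at hx
        subst hx
        simp only [Set.mem_Ico]
        omega
  · have harith : c + k * (c - 1) ≤ (k + 1) * (c - 1) + 1 := by
      have : (k + 1) * (c - 1) = k * (c - 1) + (c - 1) := by ring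
      omega
    intro C hC
    rcases List.mem_append.mp hC with hC | hC
    · have := h1n C hC
      omega
    · obtain ⟨C', hC', rfl⟩ := List.mem_map.mp (List.mem_of_mem_tail hC)
      have h1 : C'.ncard ≤ (b - 1) + k * (c - 1) := h2n C' (List.mem_reverse.mp hC')
      calc (C' ∪ {a + m - 1}).ncard ≤ C'.ncard + ({a + m - 1} : Set ℕ).ncard :=
            Set.ncard_union_le _ _
      _ ≤ ((b - 1) + k * (c - 1)) + 1 := by rw [Set.ncard_singleton]; omega
      _ ≤ (k + 1) * (c - 1) + 1 := by omega
  · rw [List.length_append, List.length_tail, hpiece_def, List.length_map,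
      List.length_reverse]
    rw [hminb] at h1len
    have h8 : 2 ^ k * min ((b - 1) * s) m ≤ 2 ^ k * m := Nat.mul_le_mul_left _ (by omega)
    have h9 : 2 ^ (k + 1) * m = 2 ^ k * m + 2 ^ k * m := by ring
    omega

lemma toggle_all (c : ℕ) (hc : 1 ≤ c) : ∀ k, ToggleSpec k c := by
  intro k
  induction k with
  | zero => exact toggle_base c
  | succ k ih => exact toggle_succ k c hc ih

/-- The full pebbling on `ℕ`: from `∅` to `∅`, touching `n - 1`. -/
lemma full (k c n : ℕ) (hk : 1 ≤ k) (hc : 1 ≤ c) (hn : 1 ≤ n) (hnc : n ≤ c ^ k) :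
    ∃ L : List (Set ℕ),
      L.head? = some ∅ ∧ L.getLast? = some ∅ ∧
      L.Chain' (MoveF ∅) ∧
      (∀ C ∈ L, C ⊆ Set.Iio n) ∧
      (∀ C ∈ L, C.ncard ≤ k * c) ∧
      L.length ≤ 2 ^ k * n + 1 ∧
      (∃ C ∈ L, n - 1 ∈ C) := by
  obtain ⟨k', rfl⟩ : ∃ k', k = k' + 1 := ⟨k - 1, by omega⟩
  set s := c ^ k' with hs_def
  have hs : 1 ≤ s := Nat.one_le_pow _ _ hc
  set b := (n + s - 1) / s with hb_def
  have hdm : s * b + (n + s - 1) % s = n + s - 1 := Nat.div_add_mod _ _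
  have hmod : (n + s - 1) % s < s := Nat.mod_lt _ hs
  have hbs : n ≤ s * b := by omega
  have hb1 : 1 ≤ b := by
    rcases Nat.eq_zero_or_pos b with h | h
    · rw [h] at hbs; omega
    · exact h
  have hmsc : n ≤ s * c := by rw [hs_def, ← pow_succ]; exact hnc
  have hbc : b ≤ c := by
    have h1 : s * b < s * (c + 1) := by
      have h2 : s * (c + 1) = s * c + s := by ring
      omega
    have := Nat.lt_of_mul_lt_mul_left h1
    omega
  have hminb : min (b * s) n = n := by
    have : b * s = s * b := by ring
    omega
  have hbb : b = (n + c ^ k' - 1) / c ^ k' := by rw [hb_def, hs_def]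
  obtain ⟨L1, h1h, h1l, h1c, h1A, h1n, h1len⟩ :=
    fwd k' c hc (toggle_all c hc k') 0 n hn hnc b (le_of_eq hbb)
  rw [← hs_def] at h1l h1A h1len
  have hG0 : Set.Ico (0 - 1) 0 = (∅ : Set ℕ) := by simp
  rw [hG0] at h1c
  have hL1ne : L1 ≠ [] := by intro h; rw [h] at h1h; simp at h1h
  have hrc : (L1.reverse).Chain' (MoveF ∅) := chain'_reverse_moveF h1c
  refine ⟨L1 ++ L1.reverse.tail, ?_, ?_, ?_, ?_, ?_, ?_, ?_⟩
  · cases L1 with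
    | nil => simp at h1h
    | cons x t => simpa using h1h
  · rw [getLast?_glue (by rw [List.head?_reverse]) (by simpa using hL1ne),
      List.getLast?_reverse, h1h]
  · exact chain'_glue h1c hrc (by rw [List.head?_reverse])
  · intro C hC
    have hC' : C ∈ L1 := by
      rcases List.mem_append.mp hC with hC | hC
      · exact hC
      · exact List.mem_reverse.mp (List.mem_of_mem_tail hC)
    refine (h1A C hC').trans ?_
    rw [hminb]
    intro x hx
    simp only [Set.mem_Ico] at hx
    simp only [Set.mem_Iio]
    omega
  · intro C hC
    have hC' : C ∈ L1 := by
      rcases List.mem_append.mp hC with hC | hC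
      · exact hC
      · exact List.mem_reverse.mp (List.mem_of_mem_tail hC)
    have := h1n C hC'
    have harith : b + k' * (c - 1) ≤ (k' + 1) * c := by
      have h2 : (k' + 1) * c = k' * c + c := by ring
      have h3 : k' * (c - 1) ≤ k' * c := Nat.mul_le_mul_left _ (by omega)
      omega
    omega
  · rw [List.length_append, List.length_tail, List.length_reverse]
    rw [hminb] at h1len
    have h9 : 2 ^ (k' + 1) * n = 2 ^ k' * n + 2 ^ k' * n := by ring
    omega
  · refine ⟨↑(ckpt 0 s n b), List.mem_append.mpr (Or.inl ?_), ?_⟩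
    · exact List.mem_of_getLast? h1l
    · simp only [ckpt, Finset.coe_image, Set.mem_image, Finset.coe_Icc, Set.mem_Icc]
      exact ⟨b, ⟨hb1, le_refl b⟩, by omega⟩

end LGRP
namespace LGRP

lemma fin_set_ncard {n : ℕ} {C : Set ℕ} (hC : C ⊆ Set.Iio n) :
    {x : Fin n | (x : ℕ) ∈ C}.ncard = C.ncard := by
  have h : C = Fin.val '' {x : Fin n | (x : ℕ) ∈ C} := by
    ext y
    simp only [Set.mem_image, Set.mem_setOf_eq]
    constructor
    · intro hy
      exact ⟨⟨y, hC hy⟩, hy, rfl⟩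
    · rintro ⟨x, hx, rfl⟩
      exact hx
  conv_rhs => rw [h]
  exact (Set.ncard_image_of_injective _ Fin.val_injective).symm

lemma move_to_rev {n : ℕ} {C C' : Set ℕ} (h : MoveF ∅ C C') (hC : C ⊆ Set.Iio n)
    (hC' : C' ⊆ Set.Iio n) :
    (lineGraph n).RevMove {v : Fin n | (v : ℕ) ∈ C} {v : Fin n | (v : ℕ) ∈ C'} := by
  obtain ⟨v, -, hpred, hcase⟩ := h
  have hv : v < n := by
    rcases hcase with ⟨h1, h2⟩ | ⟨h1, h2⟩
    · exact hC' (h2 ▸ Set.mem_insert _ _)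
    · exact hC h1
  refine ⟨⟨v, hv⟩, ?_, ?_⟩
  · intro u hu
    have hu' : v = (u : Fin n).val + 1 := hu
    rcases hpred _ hu' with h | h
    · exact h
    · simp at h
  · rcases hcase with ⟨h1, h2⟩ | ⟨h1, h2⟩
    · left
      refine ⟨h1, ?_⟩
      rw [h2]
      ext w
      simp only [Set.mem_insert_iff, Set.mem_setOf_eq]
      constructor
      · rintro (h | h)
        · left; exact Fin.ext h
        · right; exact h
      · rintro (rfl | h)
        · left; rfl
        · right; exact h
    · right
      refine ⟨h1, ?_⟩
      rw [h2]
      ext w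
      simp only [Set.mem_diff, Set.mem_setOf_eq, Set.mem_singleton_iff]
      constructor
      · rintro ⟨h, h'⟩
        exact ⟨h, fun he => h' (by rw [he])⟩
      · rintro ⟨h, h'⟩
        exact ⟨h, fun he => h' (Fin.ext he)⟩

end LGRP


/-- For all positive integers `k` and `n`, the line graph on `n` vertices
has a reversible pebbling with space at most `2k * n^{1/k}` and time at most `2^k * n`. -/
theorem line_graph_reversible_pebbling (k n : ℕ) (hk : 1 ≤ k) (hn : 1 ≤ n) :
    ∃ (t : ℕ) (P : ℕ → Set (lineGraph n).V),
      (lineGraph n).IsRevPebbling ⟨n - 1, by omega⟩ t P ∧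
      ((lineGraph n).space t P : ℝ) ≤ 2 * (k : ℝ) * (n : ℝ) ^ ((1 : ℝ) / k) ∧
      t ≤ 2 ^ k * n := by
  have hx1 : (1 : ℝ) ≤ (n : ℝ) ^ ((1 : ℝ) / k) :=
    Real.one_le_rpow (by exact_mod_cast hn) (by positivity)
  set x : ℝ := (n : ℝ) ^ ((1 : ℝ) / k) with hx_def
  set c := ⌈x⌉₊ with hc_def
  have hc1 : 1 ≤ c := Nat.one_le_ceil_iff.mpr (by linarith)
  have hnc : n ≤ c ^ k := by
    have h1 : (n : ℝ) ≤ (c : ℝ) ^ k := by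
      have hxc : x ≤ (c : ℝ) := Nat.le_ceil x
      have h2 : (n : ℝ) = x ^ k := by
        rw [hx_def, ← Real.rpow_natCast x k, ← Real.rpow_mul (by positivity), one_div,
          inv_mul_cancel₀ (by exact_mod_cast (by omega : k ≠ 0) : (k : ℝ) ≠ 0),
          Real.rpow_one]
      rw [h2]
      exact pow_le_pow_left₀ (by linarith) hxc k
    exact_mod_cast h1
  obtain ⟨L, hh, hl, hchain, hA, hn', hlen, Cz, hCzL, hCz⟩ := LGRP.full k c n hk hc1 hn hnc
  have hLne : L ≠ [] := fun h => by rw [h] at hh; simp at hh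
  have hlen1 : 1 ≤ L.length := List.length_pos_iff.mpr hLne
  refine ⟨L.length - 1, fun i => {v : Fin n | (v : ℕ) ∈ L.getD i ∅}, ⟨?_, ?_, ?_, ?_⟩, ?_, ?_⟩
  · show {v : Fin n | (v : ℕ) ∈ L.getD 0 ∅} = ∅
    have hget0 : L.getD 0 ∅ = ∅ := by
      cases L with
      | nil => simp at hh
      | cons hd tl => simpa using hh
    rw [hget0]
    simp
  · have h2 : L[L.length - 1]? = some ∅ := by
      rw [← List.getLast?_eq_getElem?]
      exact hl
    have h3 : L[L.length - 1]? = some (L[L.length - 1]'(by omega)) :=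
      List.getElem?_eq_getElem (by omega)
    have h4 : L.getD (L.length - 1) ∅ = ∅ := by
      rw [List.getD_eq_getElem L ∅ (by omega : L.length - 1 < L.length)]
      rw [h3] at h2
      exact Option.some.inj h2
    show {v : Fin n | (v : ℕ) ∈ L.getD (L.length - 1) ∅} = ∅
    rw [h4]
    simp
  · obtain ⟨i, hi, hCeq⟩ := List.mem_iff_getElem.mp hCzL
    refine ⟨i, by omega, ?_⟩
    show ((⟨n - 1, by omega⟩ : Fin n) : ℕ) ∈ L.getD i ∅
    rw [List.getD_eq_getElem L ∅ hi, hCeq]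
    exact hCz
  · intro i hi
    have h1 : i < L.length := by omega
    have h2 : i + 1 < L.length := by omega
    have hm := List.isChain_iff_getElem.mp hchain i (by omega)
    have e1 : L.getD i ∅ = L[i] := List.getD_eq_getElem L ∅ h1
    have e2 : L.getD (i + 1) ∅ = L[i + 1] := List.getD_eq_getElem L ∅ h2
    show (lineGraph n).RevMove {v : Fin n | (v : ℕ) ∈ L.getD i ∅}
      {v : Fin n | (v : ℕ) ∈ L.getD (i + 1) ∅}
    rw [e1, e2]
    exact LGRP.move_to_rev hm (hA _ (L.getElem_mem _)) (hA _ (L.getElem_mem _))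
  · have hspace : (lineGraph n).space (L.length - 1)
        (fun i => {v : Fin n | (v : ℕ) ∈ L.getD i ∅}) ≤ k * c := by
      apply Finset.sup_le
      intro i hi
      simp only [Finset.mem_range] at hi
      have hilen : i < L.length := by omega
      show ({v : Fin n | (v : ℕ) ∈ L.getD i ∅}).ncard ≤ k * c
      rw [List.getD_eq_getElem L ∅ hilen,
        LGRP.fin_set_ncard (hA _ (L.getElem_mem _))]
      exact hn' _ (L.getElem_mem _)
    have hcx : (c : ℝ) ≤ x + 1 := le_of_lt (Nat.ceil_lt_add_one (by linarith))
    calc ((lineGraph n).space (L.length - 1)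
        (fun i => {v : Fin n | (v : ℕ) ∈ L.getD i ∅}) : ℝ) ≤ ((k * c : ℕ) : ℝ) :=
          Nat.cast_le.mpr hspace
    _ = (k : ℝ) * (c : ℝ) := by push_cast; ring
    _ ≤ (k : ℝ) * (2 * x) := by
        have hk0 : (0 : ℝ) ≤ (k : ℝ) := by positivity
        have : (c : ℝ) ≤ 2 * x := by linarith
        exact mul_le_mul_of_nonneg_left this hk0
    _ = 2 * (k : ℝ) * x := by ring
  · omega
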